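/- There exists a constant C such that for all real x ≥ 2, |∑_{p prime, p ≤ x} 1/p − log(log x)| ≤ C. (Mertens' second theorem in bounded-error form.) -/

import Mathlib

open Finset Nat MeasureTheory

noncomputable def mertensM1 (n : ℕ) : ℝ :=
  ∑ p ∈ (Finset.range (n + 1)).filter Nat.Prime, Real.log p / p

lemma mertensM1_nonneg (n : ℕ) : 0 ≤ mertensM1 n := by
  refine Finset.sum_nonneg fun p hp => ?_
  simp only [mem_filter, mem_range] at hp
  have : (1:ℝ) ≤ p := by exact_mod_cast hp.2.one_lt.le
  positivity


lemma mertens_cheby (n : ℕ) :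
    ∑ p ∈ (Finset.range (n + 1)).filter Nat.Prime, Real.log p ≤ n * Real.log 4 := by
  have h : (primorial n : ℝ) ≤ ((4:ℝ) ^ n) := by exact_mod_cast primorial_le_4_pow n
  have hpos : (0:ℝ) < (primorial n : ℝ) := by exact_mod_cast primorial_pos n
  have h1 : Real.log (primorial n : ℝ) ≤ n * Real.log 4 := by
    calc Real.log (primorial n : ℝ) ≤ Real.log ((4:ℝ) ^ n) := Real.log_le_log hpos h
    _ = n * Real.log 4 := by rw [Real.log_pow]
  rw [primorial] at h1
  rw [show ((∏ p ∈ Finset.range (n+1) with p.Prime, p : ℕ) : ℝ)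
      = ∏ p ∈ (Finset.range (n+1)).filter Nat.Prime, (p:ℝ) by push_cast; rfl,
    Real.log_prod] at h1
  · exact h1
  · intro p hp
    simp only [mem_filter] at hp
    exact_mod_cast hp.2.pos.ne'

lemma mertens_log_factorial (n : ℕ) :
    Real.log (n ! : ℝ) =
      ∑ p ∈ (Finset.range (n + 1)).filter Nat.Prime,
        ((n !).factorization p : ℝ) * Real.log p := by
  have hne : n ! ≠ 0 := n.factorial_ne_zero
  conv_lhs => rw [← Nat.factorization_prod_pow_eq_self hne]
  rw [Nat.prod_factorization_eq_prod_primeFactors]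
  have hsub : (n !).primeFactors ⊆ (Finset.range (n + 1)).filter Nat.Prime := by
    intro p hp
    rw [Nat.mem_primeFactors] at hp
    simp only [mem_filter, mem_range]
    exact ⟨lt_succ_of_le ((Nat.Prime.dvd_factorial hp.1).mp hp.2.1), hp.1⟩
  rw [show ((∏ p ∈ (n !).primeFactors, p ^ (n !).factorization p : ℕ) : ℝ)
      = ∏ p ∈ (n !).primeFactors, (p:ℝ) ^ (n !).factorization p by push_cast; rfl]
  rw [Real.log_prod]
  · rw [Finset.sum_subset hsub]
    · exact Finset.sum_congr rfl fun p hp => by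
        rw [Real.log_pow]
    · intro p hp hnp
      rw [Nat.mem_primeFactors] at hnp
      simp only [mem_filter, mem_range] at hp
      have : (n !).factorization p = 0 := by
        by_contra h
        exact hnp ⟨hp.2, Nat.dvd_of_factorization_pos h, hne⟩
      simp [this]
  · intro p hp
    have hp' := Nat.prime_of_mem_primeFactors hp
    have : (0:ℝ) < p := by exact_mod_cast hp'.pos
    positivity

-- factorial upper bound
lemma mertens_fact_ub (n : ℕ) : Real.log (n ! : ℝ) ≤ n * Real.log n := by
  have h : (n ! : ℝ) ≤ (n:ℝ) ^ n := by exact_mod_cast n.factorial_le_pow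
  calc Real.log (n ! : ℝ) ≤ Real.log ((n:ℝ) ^ n) :=
        Real.log_le_log (by exact_mod_cast n.factorial_pos) h
    _ = n * Real.log n := by rw [Real.log_pow]

-- factorial lower bound
lemma mertens_fact_lb (n : ℕ) : (n : ℝ) * Real.log n - n ≤ Real.log (n ! : ℝ) := by
  induction n with
  | zero => simp
  | succ n ih =>
    have hfact : Real.log ((n+1)! : ℝ) = Real.log (n+1 : ℝ) + Real.log (n ! : ℝ) := by
      rw [Nat.factorial_succ]
      push_cast
      rw [Real.log_mul (by positivity) (by exact_mod_cast n.factorial_pos.ne')]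
    have key : (n:ℝ) * Real.log (n+1) - n * Real.log n ≤ 1 := by
      rcases Nat.eq_zero_or_pos n with h0 | h1
      · subst h0; simp
      · have hn : (0:ℝ) < n := by exact_mod_cast h1
        have := Real.log_le_sub_one_of_pos (show (0:ℝ) < (n+1)/n by positivity)
        have hlog : Real.log ((n+1)/n : ℝ) = Real.log (n+1:ℝ) - Real.log n :=
          Real.log_div (by positivity) hn.ne'
        rw [hlog] at this
        have h2 : ((n:ℝ)+1)/n - 1 = 1/n := by field_simp; ring
        rw [h2] at this
        calc (n:ℝ) * Real.log (n+1) - n * Real.log n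
            = n * (Real.log (n+1) - Real.log n) := by ring
          _ ≤ n * (1/n) := by
              apply mul_le_mul_of_nonneg_left this hn.le
          _ = 1 := by field_simp
    push_cast
    push_cast at ih
    nlinarith [ih]

-- nu lower bound
lemma mertens_nu_lb {p : ℕ} (hp : p.Prime) (n : ℕ) : (n / p : ℕ) ≤ (n !).factorization p := by
  rw [← Nat.Prime.pow_dvd_iff_le_factorization hp n.factorial_ne_zero]
  rw [Nat.Prime.pow_dvd_factorial_iff hp (Nat.lt_succ_self _)]
  rcases Nat.eq_zero_or_pos (Nat.log p n) with h0 | h1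
  · have : n < p := by
      by_contra h
      have := Nat.log_pos hp.one_lt (le_of_not_gt h)
      omega
    simp [Nat.div_eq_of_lt this]
  · have hmem : 1 ∈ Finset.Ico 1 (Nat.log p n + 1) := by
      simp [h1]
    calc n / p = n / p ^ 1 := by rw [pow_one]
      _ ≤ ∑ i ∈ Finset.Ico 1 (Nat.log p n + 1), n / p ^ i :=
          Finset.single_le_sum (f := fun i => n / p ^ i) (fun i _ => Nat.zero_le _) hmem

-- nu upper bound
lemma mertens_nu_ub {p : ℕ} (hp : p.Prime) (n : ℕ) :
    ((n !).factorization p : ℝ) ≤ (n : ℝ) / ((p : ℝ) - 1) := by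
  have h1 : (n !).factorization p ≤ n / (p - 1) := by
    have hdvd : p ^ (n !).factorization p ∣ n ! := Nat.ordProj_dvd _ _
    rw [Nat.Prime.pow_dvd_factorial_iff hp (Nat.lt_succ_self _)] at hdvd
    exact hdvd.trans (Nat.geom_sum_Ico_le hp.two_le _ _)
  have h2 : ((n / (p-1) : ℕ) : ℝ) ≤ (n : ℝ) / ((p-1 : ℕ) : ℝ) := Nat.cast_div_le
  have h3 : ((p - 1 : ℕ) : ℝ) = (p : ℝ) - 1 := by
    have := hp.two_le
    push_cast [Nat.cast_sub (by omega : 1 ≤ p)]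
    ring
  calc ((n !).factorization p : ℝ) ≤ ((n / (p-1) : ℕ) : ℝ) := by exact_mod_cast h1
    _ ≤ (n : ℝ) / ((p-1:ℕ) : ℝ) := h2
    _ = (n : ℝ) / ((p:ℝ) - 1) := by rw [h3]

lemma mertens_sqrt_tele {y : ℝ} (hy : 2 ≤ y) :
    Real.log y / (y * (y - 1)) ≤ 6 * ((Real.sqrt (y-1))⁻¹ - (Real.sqrt y)⁻¹) := by
  set a := Real.sqrt (y - 1) with ha
  set b := Real.sqrt y with hb
  have ha2 : a ^ 2 = y - 1 := Real.sq_sqrt (by linarith)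
  have hb2 : b ^ 2 = y := Real.sq_sqrt (by linarith)
  have ha1 : 1 ≤ a := by
    have := Real.sqrt_le_sqrt (show (1:ℝ) ≤ y - 1 by linarith)
    rwa [Real.sqrt_one] at this
  have hab : a ≤ b := Real.sqrt_le_sqrt (by linarith)
  have hb0 : 0 < b := by linarith
  have ha0 : 0 < a := by linarith
  have hlog : Real.log y ≤ 2 * b := by
    have h1 : Real.log y = 2 * Real.log b := by
      rw [hb, Real.log_sqrt (by linarith)]; ring
    have h2 : Real.log b ≤ b - 1 := Real.log_le_sub_one_of_pos hb0
    linarith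
  have hba : b ≤ 2 * a := by nlinarith
  have hden : 0 < y * (y - 1) := by nlinarith
  have hprod : (b - a) * (b + a) = 1 := by nlinarith
  have h6 : 6 * (a⁻¹ - b⁻¹) = 6 * (b - a) / (a * b) := by
    field_simp
  rw [h6, div_le_div_iff₀ hden (by positivity)]
  have hXsub : y * (y - 1) = a^2 * b^2 := by rw [ha2, hb2]; ring
  rw [hXsub]
  have step1 : Real.log y * (a * b) * (b + a) ≤ 2 * b * (a * b) * (b + a) := by
    have : (0:ℝ) ≤ (a*b) * (b+a) := by positivity
    nlinarith [mul_le_mul_of_nonneg_right hlog this]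
  have step2 : 2 * b * (a * b) * (b + a) ≤ 6 * (a^2 * b^2) := by
    nlinarith [mul_le_mul_of_nonneg_left hba (show (0:ℝ) ≤ 2*a*b^2 by positivity)]
  have step3 : 6 * (a^2*b^2) = 6 * (b - a) * (a^2 * b^2) * (b + a) := by
    nlinarith [hprod]
  have hba0 : 0 < b + a := by linarith
  have := (mul_le_mul_iff_of_pos_right hba0).mp (by linarith : Real.log y * (a*b) * (b+a) ≤ (6 * (b-a) * (a^2*b^2)) * (b+a))
  linarith [this]

lemma mertens_tele_sum (n : ℕ) :
    ∑ k ∈ Finset.Icc 2 n, Real.log k / (k * ((k:ℝ) - 1)) ≤ 6 := by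
  have key : ∀ m : ℕ, 1 ≤ m →
      ∑ k ∈ Finset.Icc 2 m, Real.log k / (k * ((k:ℝ) - 1)) ≤ 6 * (1 - (Real.sqrt m)⁻¹) := by
    intro m hm
    induction m with
    | zero => omega
    | succ m ih =>
      rcases Nat.lt_or_ge m 1 with h1 | h1
      · interval_cases m
        simp
      · have hsum := ih h1
        rw [Finset.sum_Icc_succ_top (by omega : 2 ≤ m + 1)]
        have hstep := mertens_sqrt_tele (y := (m+1 : ℝ)) (by exact_mod_cast by omega : (2:ℝ) ≤ (m+1:ℝ))
        have hcast : ((m:ℝ) + 1) - 1 = (m:ℝ) := by ring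
        rw [hcast] at hstep
        push_cast
        push_cast at hsum hstep
        rw [hcast]
        linarith
  rcases Nat.lt_or_ge n 1 with h | h
  · interval_cases n; simp
  · have := key n h
    have h2 : 0 ≤ (Real.sqrt n)⁻¹ := by positivity
    linarith

lemma mertensM1_ub {n : ℕ} (hn : 1 ≤ n) : mertensM1 n ≤ Real.log n + Real.log 4 := by
  have hnR : (0:ℝ) < n := by exact_mod_cast hn
  have key : (n:ℝ) * mertensM1 n ≤ (n:ℝ) * Real.log n + n * Real.log 4 := by
    rw [mertensM1, Finset.mul_sum]
    calc ∑ p ∈ (Finset.range (n+1)).filter Nat.Prime, (n:ℝ) * (Real.log p / p)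
        ≤ ∑ p ∈ (Finset.range (n+1)).filter Nat.Prime,
            (((n / p : ℕ) : ℝ) * Real.log p + Real.log p) := by
          refine Finset.sum_le_sum fun p hp => ?_
          simp only [mem_filter, mem_range] at hp
          have hp2 : (2:ℝ) ≤ p := by exact_mod_cast hp.2.two_le
          have hlogp : 0 ≤ Real.log p := Real.log_nonneg (by linarith)
          have hdiv : (n:ℝ) / p ≤ ((n / p : ℕ) : ℝ) + 1 := by
            rw [div_le_iff₀ (by linarith : (0:ℝ) < p)]
            have h1 : n < (n / p + 1) * p := by
              have hmod := Nat.mod_lt n hp.2.pos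
              have hdm := Nat.div_add_mod n p
              calc n = p * (n/p) + n % p := hdm.symm
                _ < p * (n/p) + p := by omega
                _ = (n/p+1)*p := by ring
            calc (n:ℝ) ≤ (((n / p + 1) * p : ℕ) : ℝ) := by exact_mod_cast h1.le
              _ = (((n/p:ℕ):ℝ) + 1) * p := by push_cast; ring
          calc (n:ℝ) * (Real.log p / p) = ((n:ℝ)/p) * Real.log p := by ring
            _ ≤ (((n / p : ℕ) : ℝ) + 1) * Real.log p :=
                mul_le_mul_of_nonneg_right hdiv hlogp
            _ = ((n / p : ℕ) : ℝ) * Real.log p + Real.log p := by ring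
      _ = (∑ p ∈ (Finset.range (n+1)).filter Nat.Prime, ((n / p : ℕ) : ℝ) * Real.log p)
          + ∑ p ∈ (Finset.range (n+1)).filter Nat.Prime, Real.log p := by
          rw [Finset.sum_add_distrib]
      _ ≤ Real.log (n ! : ℝ) + (n:ℝ) * Real.log 4 := by
          gcongr ?_ + ?_
          · rw [mertens_log_factorial]
            refine Finset.sum_le_sum fun p hp => ?_
            simp only [mem_filter, mem_range] at hp
            have hp2 : (2:ℝ) ≤ p := by exact_mod_cast hp.2.two_le
            have hlogp : 0 ≤ Real.log p := Real.log_nonneg (by linarith)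
            exact mul_le_mul_of_nonneg_right (by exact_mod_cast mertens_nu_lb hp.2 n) hlogp
          · exact mertens_cheby n
      _ ≤ (n:ℝ) * Real.log n + n * Real.log 4 := by linarith [mertens_fact_ub n]
  nlinarith [key]

lemma mertensM1_lb {n : ℕ} (hn : 1 ≤ n) : Real.log n - 7 ≤ mertensM1 n := by
  have hnR : (0:ℝ) < n := by exact_mod_cast hn
  have key : (n:ℝ) * Real.log n - n ≤ (n:ℝ) * mertensM1 n + n * 6 := by
    have h1 := mertens_fact_lb n
    rw [mertens_log_factorial] at h1
    have h2 : ∑ p ∈ (Finset.range (n+1)).filter Nat.Prime,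
        ((n !).factorization p : ℝ) * Real.log p
        ≤ (n:ℝ) * mertensM1 n + (n:ℝ) * ∑ p ∈ (Finset.range (n+1)).filter Nat.Prime,
            Real.log p / (p * ((p:ℝ) - 1)) := by
      rw [mertensM1, Finset.mul_sum, Finset.mul_sum, ← Finset.sum_add_distrib]
      refine Finset.sum_le_sum fun p hp => ?_
      simp only [mem_filter, mem_range] at hp
      have hp2 : (2:ℝ) ≤ p := by exact_mod_cast hp.2.two_le
      have hlogp : 0 ≤ Real.log p := Real.log_nonneg (by linarith)
      have hid : (n:ℝ) / ((p:ℝ) - 1) * Real.log p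
          = (n:ℝ) * (Real.log p / p) + (n:ℝ) * (Real.log p / (p * ((p:ℝ)-1))) := by
        have hp0 : (p:ℝ) ≠ 0 := by linarith
        have hp1 : (p:ℝ) - 1 ≠ 0 := by linarith
        field_simp
        ring
      calc ((n !).factorization p : ℝ) * Real.log p
          ≤ ((n:ℝ) / ((p:ℝ) - 1)) * Real.log p :=
            mul_le_mul_of_nonneg_right (mertens_nu_ub hp.2 n) hlogp
        _ = _ := hid
    have h3 : ∑ p ∈ (Finset.range (n+1)).filter Nat.Prime,
        Real.log p / (p * ((p:ℝ) - 1)) ≤ 6 := by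
      refine le_trans (Finset.sum_le_sum_of_subset_of_nonneg ?_ ?_) (mertens_tele_sum n)
      · intro p hp
        simp only [mem_filter, mem_range] at hp
        simp only [Finset.mem_Icc]
        exact ⟨hp.2.two_le, by omega⟩
      · intro k hk _
        simp only [Finset.mem_Icc] at hk
        have hk2 : (2:ℝ) ≤ k := by exact_mod_cast hk.1
        have : 0 ≤ Real.log k := Real.log_nonneg (by linarith)
        have : (0:ℝ) < k * ((k:ℝ)-1) := by nlinarith
        positivity
    nlinarith [h2, h3, h1]
  nlinarith [key]

noncomputable def mertensc (k : ℕ) : ℝ := if k.Prime then Real.log k / k else 0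

lemma mertensc_sum (m : ℕ) : ∑ k ∈ Finset.Icc 0 m, mertensc k = mertensM1 m := by
  rw [mertensM1, Finset.sum_filter]
  congr 1
  ext k
  simp [Nat.lt_succ_iff]

lemma mertens_floor32 : ⌊(3/2 : ℝ)⌋₊ = 1 := by
  rw [Nat.floor_eq_iff (by norm_num)]
  norm_num

lemma mertensM1_one : mertensM1 1 = 0 := by
  have h : (Finset.range 2).filter Nat.Prime = ∅ := by decide
  rw [mertensM1, h, Finset.sum_empty]

-- deriv of (log t)⁻¹
lemma mertens_hasDeriv_inv_log {t : ℝ} (ht : 1 < t) :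
    HasDerivAt (fun u : ℝ => (Real.log u)⁻¹) (-(t⁻¹) / (Real.log t)^2) t :=
  (Real.hasDerivAt_log (by linarith)).inv (ne_of_gt (Real.log_pos ht))

lemma mertens_deriv_inv_log {t : ℝ} (ht : 1 < t) :
    deriv (fun u : ℝ => (Real.log u)⁻¹) t = -(t⁻¹) / (Real.log t)^2 :=
  (mertens_hasDeriv_inv_log ht).deriv

lemma mertens_hasDeriv_loglog {t : ℝ} (ht : 1 < t) :
    HasDerivAt (fun u : ℝ => Real.log (Real.log u)) (t⁻¹ / Real.log t) t :=
  (Real.hasDerivAt_log (by linarith)).log (ne_of_gt (Real.log_pos ht))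

theorem mertens_second_bounded :
    ∃ C : ℝ, ∀ x : ℝ, 2 ≤ x →
      |(∑ p ∈ (Finset.range (⌊x⌋₊ + 1)).filter Nat.Prime, (1 : ℝ) / p) -
        Real.log (Real.log x)| ≤ C := by
  set A' : ℝ := 7 + Real.log 2 with hA'
  have hA'pos : 0 ≤ A' := by
    have := Real.log_nonneg (by norm_num : (1:ℝ) ≤ 2); rw [hA']; linarith
  -- antiderivatives
  set Flo : ℝ → ℝ := fun u => -Real.log (Real.log u) + Real.log 4 * (Real.log u)⁻¹ with hFlo
  set Fhi : ℝ → ℝ := fun u => -Real.log (Real.log u) - A' * (Real.log u)⁻¹ with hFhi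
  refine ⟨(1 + Real.log 4 * (Real.log 2)⁻¹ + |Flo (3/2)|) + |Fhi (3/2)|, fun x hx => ?_⟩
  set n := ⌊x⌋₊ with hn
  have hx1 : (1:ℝ) < x := by linarith
  have hlog2pos : (0:ℝ) < Real.log 2 := Real.log_pos (by norm_num)
  have hlogx : Real.log 2 ≤ Real.log x := Real.log_le_log (by norm_num) hx
  have hlogxpos : (0:ℝ) < Real.log x := lt_of_lt_of_le hlog2pos hlogx
  have hlog4 : (0:ℝ) ≤ Real.log 4 := Real.log_nonneg (by norm_num)
  have h32x : (3/2 : ℝ) ≤ x := by linarith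
  -- differentiability hypotheses for Abel summation
  have hdiff : ∀ t ∈ Set.Icc (3/2 : ℝ) x, DifferentiableAt ℝ (fun u : ℝ => (Real.log u)⁻¹) t := by
    intro t ht
    exact (mertens_hasDeriv_inv_log (by linarith [ht.1])).differentiableAt
  have hderiv_cont : ContinuousOn (fun t : ℝ => -(t⁻¹) / (Real.log t)^2) (Set.Icc (3/2:ℝ) x) := by
    apply ContinuousOn.div
    · exact (continuousOn_inv₀.mono (fun t ht => by
        simp only [Set.mem_compl_iff, Set.mem_singleton_iff]
        intro h; rw [h] at ht; exact absurd ht.1 (by norm_num))).neg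
    · exact ((Real.continuousOn_log.mono (fun t ht => by
        simp only [Set.mem_compl_iff, Set.mem_singleton_iff]
        intro h; rw [h] at ht; exact absurd ht.1 (by norm_num))).pow 2)
    · intro t ht
      have : 0 < Real.log t := Real.log_pos (by linarith [ht.1])
      positivity
  have hint : IntegrableOn (deriv (fun u : ℝ => (Real.log u)⁻¹)) (Set.Icc (3/2:ℝ) x) := by
    refine (hderiv_cont.integrableOn_Icc).congr_fun ?_ measurableSet_Icc
    intro t ht
    exact (mertens_deriv_inv_log (by linarith [ht.1])).symm
  -- Abel summation
  have habel := sum_mul_eq_sub_sub_integral_mul mertensc (f := fun u : ℝ => (Real.log u)⁻¹)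
    (by norm_num : (0:ℝ) ≤ 3/2) h32x hdiff hint
  rw [mertens_floor32] at habel
  simp only [mertensc_sum] at habel
  rw [mertensM1_one, mul_zero, sub_zero] at habel
  -- identify the LHS with the sum of 1/p
  have hlhs : ∑ k ∈ Finset.Ioc 1 ⌊x⌋₊, (Real.log (k:ℝ))⁻¹ * mertensc k
      = ∑ p ∈ (Finset.range (⌊x⌋₊ + 1)).filter Nat.Prime, (1 : ℝ) / p := by
    rw [Finset.sum_congr rfl (g := fun k => if k.Prime then (1:ℝ)/k else 0)
      (fun k hk => ?_), ← Finset.sum_filter]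
    · apply Finset.sum_congr _ (fun k _ => rfl)
      ext k
      simp only [Finset.mem_filter, Finset.mem_Ioc, Finset.mem_range, Nat.lt_succ_iff]
      constructor
      · rintro ⟨⟨h1, h2⟩, h3⟩; exact ⟨h2, h3⟩
      · rintro ⟨h1, h2⟩; exact ⟨⟨h2.one_lt, h1⟩, h2⟩
    · simp only [Finset.mem_Ioc] at hk
      by_cases hkp : k.Prime
      · have hklog : Real.log k ≠ 0 := ne_of_gt (Real.log_pos (by exact_mod_cast hk.1))
        simp only [mertensc, hkp, if_true]
        field_simp
      · simp [mertensc, hkp]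
  rw [hlhs] at habel
  -- pointwise facts on the integration interval
  have hpoint : ∀ t ∈ Set.Ioc (3/2 : ℝ) x,
      (1 < t) ∧ (0 < Real.log t) ∧ 1 ≤ ⌊t⌋₊ ∧
      mertensM1 ⌊t⌋₊ ≤ Real.log t + Real.log 4 ∧
      Real.log t - A' ≤ mertensM1 ⌊t⌋₊ := by
    intro t ht
    obtain ⟨ht32, htx⟩ := ht
    have ht1 : (1:ℝ) < t := by linarith
    have hlt : 0 < Real.log t := Real.log_pos ht1
    have hfl1 : 1 ≤ ⌊t⌋₊ := Nat.le_floor (by exact_mod_cast ht1.le)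
    have hflle : (⌊t⌋₊ : ℝ) ≤ t := Nat.floor_le (by linarith)
    have hflpos : (0:ℝ) < (⌊t⌋₊ : ℝ) := by exact_mod_cast hfl1
    have hfl_ge : t/2 ≤ (⌊t⌋₊ : ℝ) := by
      rcases le_or_gt 2 t with h2t | h2t
      · have := Nat.lt_floor_add_one t
        linarith
      · have hfl : (1:ℝ) ≤ (⌊t⌋₊:ℝ) := by exact_mod_cast hfl1
        linarith
    refine ⟨ht1, hlt, hfl1, ?_, ?_⟩
    · have h1 := mertensM1_ub hfl1
      have h2 : Real.log (⌊t⌋₊ : ℝ) ≤ Real.log t := Real.log_le_log hflpos hflle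
      linarith
    · have h1 := mertensM1_lb hfl1
      have h2 : Real.log (t/2) ≤ Real.log (⌊t⌋₊ : ℝ) := Real.log_le_log (by linarith) hfl_ge
      rw [Real.log_div (by linarith) (by norm_num)] at h2
      rw [hA']
      linarith
  -- integrability of the integrand
  have hmeas : AEStronglyMeasurable
      (fun t : ℝ => deriv (fun u : ℝ => (Real.log u)⁻¹) t * mertensM1 ⌊t⌋₊)
      (volume.restrict (Set.Ioc (3/2:ℝ) x)) := by
    refine Measurable.aestronglyMeasurable ?_
    exact (measurable_deriv _).mul
      ((measurable_from_top (f := fun m : ℕ => mertensM1 m)).comp Nat.measurable_floor)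
  have hintegrand : IntegrableOn
      (fun t : ℝ => deriv (fun u : ℝ => (Real.log u)⁻¹) t * mertensM1 ⌊t⌋₊)
      (Set.Ioc (3/2:ℝ) x) := by
    refine Integrable.mono'
      (g := fun _ => ((3/2:ℝ)⁻¹ / (Real.log (3/2))^2) * (Real.log x + Real.log 4))
      (integrableOn_const measure_Ioc_lt_top.ne) hmeas ?_
    rw [ae_restrict_iff' measurableSet_Ioc]
    refine Filter.Eventually.of_forall (fun t ht => ?_)
    obtain ⟨ht1, hlt, hfl1, hub, hlb⟩ := hpoint t ht
    obtain ⟨ht32, htx⟩ := ht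
    rw [mertens_deriv_inv_log ht1]
    have hlog32 : 0 < Real.log (3/2 : ℝ) := Real.log_pos (by norm_num)
    have hlog32t : Real.log (3/2 : ℝ) ≤ Real.log t := Real.log_le_log (by norm_num) ht32.le
    have hM1 : |mertensM1 ⌊t⌋₊| ≤ Real.log x + Real.log 4 := by
      rw [abs_of_nonneg (mertensM1_nonneg _)]
      have : Real.log t ≤ Real.log x := Real.log_le_log (by linarith) htx
      linarith
    have hder : |(-(t⁻¹) / (Real.log t)^2)| ≤ (3/2:ℝ)⁻¹ / (Real.log (3/2))^2 := by
      rw [abs_div, abs_neg, abs_of_nonneg (by positivity : (0:ℝ) ≤ t⁻¹),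
        abs_of_nonneg (by positivity : (0:ℝ) ≤ (Real.log t)^2)]
      apply div_le_div₀ (by positivity) ?_ (by positivity) ?_
      · exact inv_anti₀ (by norm_num) ht32.le
      · exact pow_le_pow_left₀ hlog32.le hlog32t 2
    rw [norm_mul, Real.norm_eq_abs, Real.norm_eq_abs]
    exact mul_le_mul hder hM1 (abs_nonneg _) (by positivity)
  -- continuity of the comparison functions
  have hcontc : ∀ c : ℝ, ContinuousOn
      (fun t : ℝ => -(t⁻¹) / (Real.log t)^2 * (Real.log t + c)) (Set.Icc (3/2:ℝ) x) := by
    intro c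
    refine hderiv_cont.mul (ContinuousOn.add ?_ continuousOn_const)
    exact Real.continuousOn_log.mono (fun t ht => by
      simp only [Set.mem_compl_iff, Set.mem_singleton_iff]
      intro h; rw [h] at ht; exact absurd ht.1 (by norm_num))
  -- FTC evaluations
  have hFT : ∀ c : ℝ,
      ∫ t in Set.Ioc (3/2:ℝ) x, -(t⁻¹) / (Real.log t)^2 * (Real.log t + c)
        = (-Real.log (Real.log x) + c * (Real.log x)⁻¹)
          - (-Real.log (Real.log (3/2)) + c * (Real.log (3/2))⁻¹) := by
    intro c
    rw [← intervalIntegral.integral_of_le h32x]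
    apply intervalIntegral.integral_eq_sub_of_hasDerivAt
    · intro t ht
      rw [Set.uIcc_of_le h32x] at ht
      have ht1 : (1:ℝ) < t := by linarith [ht.1]
      have hlt : 0 < Real.log t := Real.log_pos ht1
      have H := ((mertens_hasDeriv_loglog ht1).neg).add
        ((mertens_hasDeriv_inv_log ht1).const_mul c)
      have heq : -(t⁻¹) / (Real.log t)^2 * (Real.log t + c)
          = -(t⁻¹ / Real.log t) + c * (-(t⁻¹) / (Real.log t)^2) := by
        field_simp
        ring
      rw [heq]
      exact H
    · rw [intervalIntegrable_iff_integrableOn_Icc_of_le h32x]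
      exact (hcontc c).integrableOn_Icc
  -- bounds on the integral
  set J := ∫ t in Set.Ioc (3/2:ℝ) x, deriv (fun u : ℝ => (Real.log u)⁻¹) t * mertensM1 ⌊t⌋₊
    with hJdef
  have hJlo : (-Real.log (Real.log x) + Real.log 4 * (Real.log x)⁻¹)
      - (-Real.log (Real.log (3/2)) + Real.log 4 * (Real.log (3/2))⁻¹) ≤ J := by
    rw [← hFT (Real.log 4), hJdef]
    refine setIntegral_mono_on ?_ hintegrand measurableSet_Ioc ?_
    · exact ((hcontc (Real.log 4)).integrableOn_Icc).mono_set Set.Ioc_subset_Icc_self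
    · intro t ht
      obtain ⟨ht1, hlt, hfl1, hub, hlb⟩ := hpoint t ht
      rw [mertens_deriv_inv_log ht1]
      have hc : -(t⁻¹) / (Real.log t)^2 ≤ 0 := by
        have : (0:ℝ) ≤ t⁻¹ / (Real.log t)^2 := by positivity
        rw [neg_div]
        linarith
      exact mul_le_mul_of_nonpos_left hub hc
  have hJhi : J ≤ (-Real.log (Real.log x) + (-A') * (Real.log x)⁻¹)
      - (-Real.log (Real.log (3/2)) + (-A') * (Real.log (3/2))⁻¹) := by
    have h1 : ∀ t : ℝ, -(t⁻¹) / (Real.log t)^2 * (Real.log t + (-A'))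
        = -(t⁻¹) / (Real.log t)^2 * (Real.log t - A') := by intro t; ring
    rw [← hFT (-A'), hJdef]
    refine setIntegral_mono_on hintegrand ?_ measurableSet_Ioc ?_
    · exact ((hcontc (-A')).integrableOn_Icc).mono_set Set.Ioc_subset_Icc_self
    · intro t ht
      obtain ⟨ht1, hlt, hfl1, hub, hlb⟩ := hpoint t ht
      rw [mertens_deriv_inv_log ht1, h1 t]
      have hc : -(t⁻¹) / (Real.log t)^2 ≤ 0 := by
        have : (0:ℝ) ≤ t⁻¹ / (Real.log t)^2 := by positivity
        rw [neg_div]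
        linarith
      exact mul_le_mul_of_nonpos_left hlb hc
  -- boundary term bounds
  have hxIoc : x ∈ Set.Ioc (3/2:ℝ) x := ⟨by linarith, le_rfl⟩
  obtain ⟨-, -, -, hubx, -⟩ := hpoint x hxIoc
  have hbd1 : 0 ≤ (Real.log x)⁻¹ * mertensM1 ⌊x⌋₊ :=
    mul_nonneg (by positivity) (mertensM1_nonneg _)
  have hinvx : (Real.log x)⁻¹ ≤ (Real.log 2)⁻¹ := inv_anti₀ hlog2pos hlogx
  have hbd2 : (Real.log x)⁻¹ * mertensM1 ⌊x⌋₊ ≤ 1 + Real.log 4 * (Real.log 2)⁻¹ := by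
    calc (Real.log x)⁻¹ * mertensM1 ⌊x⌋₊
        ≤ (Real.log x)⁻¹ * (Real.log x + Real.log 4) := by
          exact mul_le_mul_of_nonneg_left hubx (by positivity)
      _ = 1 + Real.log 4 * (Real.log x)⁻¹ := by field_simp
      _ ≤ 1 + Real.log 4 * (Real.log 2)⁻¹ := by
          have := mul_le_mul_of_nonneg_left hinvx hlog4
          linarith
  -- final assembly
  rw [habel]
  have hFlo32 : Flo (3/2) = -Real.log (Real.log (3/2)) + Real.log 4 * (Real.log (3/2))⁻¹ := rfl
  have hFhi32 : Fhi (3/2) = -Real.log (Real.log (3/2)) - A' * (Real.log (3/2))⁻¹ := rfl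
  have hAx : 0 ≤ A' * (Real.log x)⁻¹ := mul_nonneg hA'pos (by positivity)
  have h4x : 0 ≤ Real.log 4 * (Real.log x)⁻¹ := mul_nonneg hlog4 (by positivity)
  rw [abs_le]
  constructor
  · have hFhiabs := neg_abs_le (Fhi (3/2))
    have h1 : (0:ℝ) ≤ 1 + Real.log 4 * (Real.log 2)⁻¹ + |Flo (3/2)| := by positivity
    rw [hFhi32] at hFhiabs
    linarith [hJhi, hbd1]
  · have hFloabs := le_abs_self (Flo (3/2))
    have h2 : (0:ℝ) ≤ |Fhi (3/2)| := abs_nonneg _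
    rw [hFlo32] at hFloabs
    linarith [hJlo, hbd2]
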